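/- For every q ∈ S_n and every c ∈ ℝ, the sublevel set {θ ∈ ℝⁿ : L_q(θ) ≤ c} of the loss in θ coordinates is compact; in particular L_q is coercive, i.e., L_q(θ) → ∞ as ‖θ‖ → ∞. -/

import Mathlib

open Filter

noncomputable section

abbrev E (n : ℕ) := EuclideanSpace ℝ (Fin n)

/-- The open probability simplex `S_n` inside `ℝ^{n+1}`. -/
def simplex (n : ℕ) : Set (Fin (n+1) → ℝ) :=
  {p | (∀ i, 0 < p i) ∧ ∑ i, p i = 1}

/-- The mixture (`η`) coordinate domain `Δ_n`. -/
def Δset (n : ℕ) : Set (E n) := {η | (∀ i, 0 < η i) ∧ ∑ i, η i < 1}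

/-- The distribution in `S_n` corresponding to `η` coordinates. -/
def mixDist {n : ℕ} (η : E n) : Fin (n+1) → ℝ :=
  Fin.snoc (fun i => η i) (1 - ∑ i, η i)

/-- The distribution in `S_n` corresponding to `θ` coordinates. -/
def expDist {n : ℕ} (θ : E n) : Fin (n+1) → ℝ :=
  Fin.snoc (fun i => Real.exp (θ i) / (1 + ∑ j, Real.exp (θ j)))
    (1 / (1 + ∑ j, Real.exp (θ j)))

/-- The `η` coordinates of a distribution `q ∈ S_n`. -/
def etaCoord {n : ℕ} (q : Fin (n+1) → ℝ) : E n := WithLp.toLp 2 (fun i : Fin n => q i.castSucc)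

/-- The `θ` coordinates of a distribution `q ∈ S_n`. -/
def thetaCoord {n : ℕ} (q : Fin (n+1) → ℝ) : E n :=
  WithLp.toLp 2 (fun i : Fin n => Real.log (q i.castSucc / q (Fin.last n)))

/-- Kullback–Leibler divergence `D(q‖p)`. -/
def KL {n : ℕ} (q p : Fin (n+1) → ℝ) : ℝ := ∑ i, q i * Real.log (q i / p i)

/-- Log-partition function `ψ(θ) = log(1 + Σ e^{θ_i})`. -/
def psi {n : ℕ} (θ : E n) : ℝ := Real.log (1 + ∑ i, Real.exp (θ i))

/-- Negative entropy `φ(η)`. -/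
def phi {n : ℕ} (η : E n) : ℝ :=
  (∑ i, η i * Real.log (η i)) + (1 - ∑ i, η i) * Real.log (1 - ∑ i, η i)

/-- The loss `L_q` in `η` coordinates: `η ↦ D(q ‖ p(η))`. -/
def Leta {n : ℕ} (q : Fin (n+1) → ℝ) (η : E n) : ℝ := KL q (mixDist η)

/-- The loss `L_q` in `θ` coordinates: `θ ↦ D(q ‖ p(θ))`. -/
def Ltheta {n : ℕ} (q : Fin (n+1) → ℝ) (θ : E n) : ℝ := KL q (expDist θ)

/-- The Hessian of `f : ℝⁿ → ℝ` at `x`, as the `n × n` matrix of second partial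
derivatives. -/
def hess {n : ℕ} (f : E n → ℝ) (x : E n) : Matrix (Fin n) (Fin n) ℝ :=
  Matrix.of fun i j =>
    fderiv ℝ (fun y => fderiv ℝ f y (EuclideanSpace.single j 1)) x (EuclideanSpace.single i 1)

/-- The set of (real) eigenvalues of a matrix. -/
def lamSet {n : ℕ} (A : Matrix (Fin n) (Fin n) ℝ) : Set ℝ :=
  {μ | ∃ v : Fin n → ℝ, v ≠ 0 ∧ A.mulVec v = μ • v}

/-- Largest eigenvalue `λ_max`. -/
def lamMax {n : ℕ} (A : Matrix (Fin n) (Fin n) ℝ) : ℝ := sSup (lamSet A)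

/-- Smallest eigenvalue `λ_min`. -/
def lamMin {n : ℕ} (A : Matrix (Fin n) (Fin n) ℝ) : ℝ := sInf (lamSet A)

/-- Condition number `cond(A) = λ_max(A)/λ_min(A)`. -/
def condNum {n : ℕ} (A : Matrix (Fin n) (Fin n) ℝ) : ℝ := lamMax A / lamMin A

/-- Operator 2-norm of a matrix (induced by the Euclidean norm). -/
def opNorm {n : ℕ} (A : Matrix (Fin n) (Fin n) ℝ) : ℝ :=
  ‖Matrix.toEuclideanCLM (𝕜 := ℝ) A‖


lemma sumexp_pos {n : ℕ} (θ : E n) : (0:ℝ) < 1 + ∑ j, Real.exp (θ j) := by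
  have : (0:ℝ) ≤ ∑ j, Real.exp (θ j) :=
    Finset.sum_nonneg fun j _ => (Real.exp_pos _).le
  linarith

lemma psi_nonneg {n : ℕ} (θ : E n) : 0 ≤ psi θ := by
  have : (1:ℝ) ≤ 1 + ∑ j, Real.exp (θ j) := by
    have : (0:ℝ) ≤ ∑ j, Real.exp (θ j) :=
      Finset.sum_nonneg fun j _ => (Real.exp_pos _).le
    linarith
  exact Real.log_nonneg this

lemma le_psi {n : ℕ} (θ : E n) (i : Fin n) : θ i ≤ psi θ := by
  have h1 : Real.exp (θ i) ≤ 1 + ∑ j, Real.exp (θ j) := by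
    have := Finset.single_le_sum (f := fun j => Real.exp (θ j))
      (fun j _ => (Real.exp_pos _).le) (Finset.mem_univ i)
    linarith
  calc θ i = Real.log (Real.exp (θ i)) := (Real.log_exp _).symm
    _ ≤ psi θ := Real.log_le_log (Real.exp_pos _) h1

lemma Ltheta_eq {n : ℕ} (q : Fin (n+1) → ℝ) (hq : q ∈ simplex n) (θ : E n) :
    Ltheta q θ = (∑ i, q i * Real.log (q i)) - (∑ i : Fin n, q i.castSucc * θ i) + psi θ := by
  obtain ⟨hpos, hsum⟩ := hq
  have hS := sumexp_pos θ
  have hSne : (1 + ∑ j, Real.exp (θ j)) ≠ 0 := ne_of_gt hS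
  unfold Ltheta KL expDist psi
  rw [Fin.sum_univ_castSucc]
  simp only [Fin.snoc_castSucc, Fin.snoc_last]
  have hterm : ∀ i : Fin n,
      q i.castSucc * Real.log (q i.castSucc / (Real.exp (θ i) / (1 + ∑ j, Real.exp (θ j))))
      = q i.castSucc * (Real.log (q i.castSucc) - θ i + Real.log (1 + ∑ j, Real.exp (θ j))) := by
    intro i
    rw [Real.log_div (ne_of_gt (hpos _)) (div_ne_zero (Real.exp_ne_zero _) hSne),
      Real.log_div (Real.exp_ne_zero _) hSne, Real.log_exp]
    ring
  have hlast : q (Fin.last n) * Real.log (q (Fin.last n) / (1 / (1 + ∑ j, Real.exp (θ j))))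
      = q (Fin.last n) * (Real.log (q (Fin.last n)) + Real.log (1 + ∑ j, Real.exp (θ j))) := by
    rw [Real.log_div (ne_of_gt (hpos _)) (div_ne_zero one_ne_zero hSne),
      Real.log_div one_ne_zero hSne, Real.log_one]
    ring
  rw [Finset.sum_congr rfl fun i _ => hterm i, hlast]
  have hsum' : (∑ i : Fin n, q i.castSucc) + q (Fin.last n) = 1 := by
    rw [← Fin.sum_univ_castSucc]; exact hsum
  have hlog : (∑ i : Fin (n+1), q i * Real.log (q i))
      = (∑ i : Fin n, q i.castSucc * Real.log (q i.castSucc))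
        + q (Fin.last n) * Real.log (q (Fin.last n)) := Fin.sum_univ_castSucc _
  rw [hlog]
  simp only [mul_add, mul_sub, Finset.sum_add_distrib, Finset.sum_sub_distrib,
    ← Finset.sum_mul]
  linear_combination Real.log (1 + ∑ j, Real.exp (θ j)) * hsum'

lemma norm_le_sum_abs {n : ℕ} (θ : E n) : ‖θ‖ ≤ ∑ i, |θ i| := by
  rw [EuclideanSpace.norm_eq]
  have h1 : ∑ i, ‖θ i‖ ^ 2 ≤ (∑ i, ‖θ i‖) ^ 2 :=
    Finset.sum_sq_le_sq_sum_of_nonneg fun i _ => norm_nonneg _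
  calc √(∑ i, ‖θ i‖ ^ 2) ≤ √((∑ i, ‖θ i‖) ^ 2) := Real.sqrt_le_sqrt h1
    _ = |∑ i, ‖θ i‖| := Real.sqrt_sq_eq_abs _
    _ = ∑ i, ‖θ i‖ := abs_of_nonneg (Finset.sum_nonneg fun i _ => norm_nonneg _)
    _ = ∑ i, |θ i| := by simp [Real.norm_eq_abs]


/-- Sublevel sets of `L_q` in `θ` coordinates are compact; `L_q` is coercive. -/
theorem stmt_10 {n : ℕ} (q : Fin (n+1) → ℝ) (hq : q ∈ simplex n) :
    (∀ c : ℝ, IsCompact {θ : E n | Ltheta q θ ≤ c}) ∧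
    Filter.Tendsto (Ltheta q) (Bornology.cobounded (E n)) Filter.atTop := by
  obtain ⟨hpos, hsum⟩ := hq
  set C : ℝ := ∑ i, q i * Real.log (q i) with hC
  -- minimum of q
  obtain ⟨i₀, -, hi₀⟩ := Finset.exists_min_image Finset.univ q ⟨⟨0, Nat.succ_pos n⟩, Finset.mem_univ _⟩
  set m : ℝ := q i₀ with hm
  have hmpos : 0 < m := hpos i₀
  have hmle : ∀ i, m ≤ q i := fun i => hi₀ i (Finset.mem_univ i)
  set κ : ℝ := m / (n+1) with hκ
  have hκpos : 0 < κ := by positivity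
  -- the key pointwise bound
  have key : ∀ θ : E n, C + κ * ‖θ‖ ≤ Ltheta q θ := by
    intro θ
    rw [Ltheta_eq q ⟨hpos, hsum⟩ θ]
    have hsum' : (∑ i : Fin n, q i.castSucc) + q (Fin.last n) = 1 := by
      rw [← Fin.sum_univ_castSucc]; exact hsum
    have hbound : ∑ i : Fin n, κ * |θ i| ≤ psi θ - ∑ i : Fin n, q i.castSucc * θ i := by
      rcases Nat.eq_zero_or_pos n with h0 | hn
      · subst h0
        simp [psi_nonneg θ]
      · have hdecomp : psi θ - ∑ i : Fin n, q i.castSucc * θ i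
            = ∑ i : Fin n, (q i.castSucc * (psi θ - θ i) + (q (Fin.last n) / n) * psi θ) := by
          rw [Finset.sum_add_distrib, Finset.sum_const, Finset.card_univ, Fintype.card_fin,
            nsmul_eq_mul]
          have hn' : (n:ℝ) ≠ 0 := Nat.cast_ne_zero.mpr hn.ne'
          have : (n:ℝ) * (q (Fin.last n) / n * psi θ) = q (Fin.last n) * psi θ := by
            field_simp
          rw [this]
          simp only [mul_sub, Finset.sum_sub_distrib, ← Finset.sum_mul]
          linear_combination (-psi θ) * hsum'
        rw [hdecomp]
        apply Finset.sum_le_sum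
        intro i _
        have hψ0 := psi_nonneg θ
        have hψi := le_psi θ i
        have hq1 : κ ≤ q i.castSucc := by
          have := hmle i.castSucc
          have h1 : κ ≤ m := by
            rw [hκ]
            apply div_le_self hmpos.le
            push_cast; linarith [Nat.cast_nonneg (α := ℝ) n]
          linarith
        have hq2 : κ ≤ q (Fin.last n) / n := by
          rw [hκ, div_le_div_iff₀ (by positivity) (by exact_mod_cast hn)]
          have := hmle (Fin.last n)
          have hcn : (n:ℝ) ≤ (n:ℝ)+1 := by linarith
          nlinarith [hmpos, (Nat.cast_pos (α := ℝ)).mpr hn]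
        rcases le_or_gt 0 (θ i) with hθ | hθ
        · have : κ * |θ i| ≤ (q (Fin.last n) / n) * psi θ := by
            rw [abs_of_nonneg hθ]
            have := le_psi θ i
            nlinarith
          nlinarith [mul_nonneg (hpos i.castSucc).le (sub_nonneg.mpr hψi)]
        · have : κ * |θ i| ≤ q i.castSucc * (psi θ - θ i) := by
            rw [abs_of_neg hθ]
            nlinarith
          nlinarith [mul_nonneg (div_nonneg (hpos (Fin.last n)).le (Nat.cast_nonneg n)) hψ0]
    have hnorm : κ * ‖θ‖ ≤ ∑ i : Fin n, κ * |θ i| := by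
      rw [← Finset.mul_sum]
      exact mul_le_mul_of_nonneg_left (norm_le_sum_abs θ) hκpos.le
    linarith
  -- continuity
  have hcont : Continuous (Ltheta q) := by
    have : Ltheta q = fun θ => C - (∑ i : Fin n, q i.castSucc * θ i) + psi θ :=
      funext fun θ => Ltheta_eq q ⟨hpos, hsum⟩ θ
    rw [this]
    have hlin : Continuous fun θ : E n => ∑ i : Fin n, q i.castSucc * θ i :=
      continuous_finset_sum _ fun i _ =>
        continuous_const.mul (EuclideanSpace.proj (𝕜 := ℝ) i).continuous
    have hpsi : Continuous (psi (n := n)) := by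
      apply Continuous.log
      · exact continuous_const.add (continuous_finset_sum _ fun i _ =>
          Real.continuous_exp.comp (EuclideanSpace.proj (𝕜 := ℝ) i).continuous)
      · intro x; exact ne_of_gt (sumexp_pos x)
    exact (continuous_const.sub hlin).add hpsi
  constructor
  · intro c
    apply Metric.isCompact_of_isClosed_isBounded
    · exact isClosed_le hcont continuous_const
    · apply (Metric.isBounded_closedBall (x := (0 : E n)) (r := (c - C)/κ)).subset
      intro θ hθ
      simp only [Set.mem_setOf_eq] at hθ
      have := key θ
      rw [Metric.mem_closedBall, dist_zero_right]
      rw [le_div_iff₀ hκpos]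
      linarith
  · apply tendsto_atTop_mono key
    have h1 : Tendsto (fun θ : E n => κ * ‖θ‖) (Bornology.cobounded (E n)) atTop :=
      tendsto_norm_cobounded_atTop.const_mul_atTop hκpos
    exact tendsto_atTop_add_const_left _ C h1


end
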